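/- Let n = sm with m odd, a ∈ F_{2^s} nonzero, b ∈ F_{2^s}, and k with gcd(k, n) = 1. If x ∈ F_{2^n} satisfies x^{2^k} + x = b, then x ∈ F_{2^s}. -/
import Mathlib

private lemma pow_two_pow_mul {R : Type*} [Monoid R] (x : R) (a q : ℕ)
    (h : x ^ 2 ^ a = x) : x ^ 2 ^ (a * q) = x := by
  induction q with
  | zero => simp
  | succ q ih => rw [Nat.mul_succ, pow_add, pow_mul, ih, h]

private lemma pow_two_pow_gcd {R : Type*} [Monoid R] (x : R) :
    ∀ a b : ℕ, x ^ 2 ^ a = x → x ^ 2 ^ b = x → x ^ 2 ^ (Nat.gcd a b) = x := by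
  intro a
  induction a using Nat.strong_induction_on with
  | _ a ih =>
    intro b hxa hxb
    rcases Nat.eq_zero_or_pos a with rfl | ha
    · simpa using hxb
    · rw [Nat.gcd_rec]
      refine ih _ (Nat.mod_lt _ ha) a ?_ hxa
      have hb : b = a * (b / a) + b % a := (Nat.div_add_mod b a).symm
      calc x ^ 2 ^ (b % a) = (x ^ 2 ^ (a * (b / a))) ^ 2 ^ (b % a) := by
            rw [pow_two_pow_mul x a (b / a) hxa]
        _ = x ^ 2 ^ b := by rw [← pow_mul, ← pow_add, ← hb]
        _ = x := hxb

/-- `n = s·m` with `m` odd, `gcd(k,n) = 1`, `a ∈ 𝔽_{2^s}*`, `b ∈ 𝔽_{2^s}`.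
Every `x ∈ 𝔽_{2^n}` with `x^{2^k} + x = b` lies in `𝔽_{2^s}`. -/
theorem stmt_16 (s m n k : ℕ) (hs : 0 < s) (hm : Odd m) (hn : n = s * m)
    (hgcd : Nat.gcd k n = 1)
    (a b : GaloisField 2 n) (ha : a ^ 2 ^ s = a) (ha0 : a ≠ 0) (hb : b ^ 2 ^ s = b)
    (x : GaloisField 2 n) (hx : x ^ 2 ^ k + x = b) :
    x ^ 2 ^ s = x := by
  have hm0 : 0 < m := hm.pos
  have hn0 : n ≠ 0 := by rw [hn]; exact Nat.mul_ne_zero hs.ne' hm0.ne'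
  haveI : Fact (Nat.Prime 2) := ⟨Nat.prime_two⟩
  haveI : Fintype (GaloisField 2 n) := Fintype.ofFinite _
  have hcard : Fintype.card (GaloisField 2 n) = 2 ^ n := by
    rw [← Nat.card_eq_fintype_card]; exact GaloisField.card 2 n hn0
  have hpowcard : ∀ z : GaloisField 2 n, z ^ 2 ^ n = z := fun z => by
    rw [← hcard]; exact FiniteField.pow_card z
  have h2 : (2 : GaloisField 2 n) = 0 := CharTwo.two_eq_zero
  have hadd : ∀ (u v : GaloisField 2 n) (j : ℕ),
      (u + v) ^ 2 ^ j = u ^ 2 ^ j + v ^ 2 ^ j := fun u v j => add_pow_char_pow u v 2 j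
  set y : GaloisField 2 n := x ^ 2 ^ s + x with hy
  have hxk : x ^ 2 ^ k = b + x := by linear_combination hx - x * h2
  -- y is fixed by Frobenius^k
  have hyk : y ^ 2 ^ k = y := by
    calc y ^ 2 ^ k = (x ^ 2 ^ s) ^ 2 ^ k + x ^ 2 ^ k := by rw [hy, hadd]
      _ = (x ^ 2 ^ k) ^ 2 ^ s + x ^ 2 ^ k := by
            rw [← pow_mul, ← pow_mul, Nat.mul_comm]
      _ = (b + x) ^ 2 ^ s + (b + x) := by rw [hxk]
      _ = (b + x ^ 2 ^ s) + (b + x) := by rw [hadd, hb]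
      _ = y := by rw [hy]; linear_combination b * h2
  -- y is fixed by Frobenius, so y ∈ {0, 1}
  have hy2 : y ^ 2 = y := by
    have := pow_two_pow_gcd y k n hyk (hpowcard y)
    rw [hgcd] at this
    simpa using this
  have hy01 : y = 0 ∨ y = 1 := by
    have h0 : y * (y - 1) = 0 := by linear_combination hy2
    rcases mul_eq_zero.mp h0 with h | h
    · exact Or.inl h
    · exact Or.inr (by linear_combination h)
  have hys : y ^ 2 ^ s = y := by
    rcases hy01 with h | h
    · rw [h]; exact zero_pow (by positivity)
    · rw [h, one_pow]
  -- x is fixed by Frobenius^{2s}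
  have hxs : x ^ 2 ^ s = x + y := by rw [hy]; linear_combination - x * h2
  have hx2s : x ^ 2 ^ (s * 2) = x := by
    calc x ^ 2 ^ (s * 2) = (x ^ 2 ^ s) ^ 2 ^ s := by
          rw [← pow_mul, ← pow_add, Nat.mul_two]
      _ = (x + y) ^ 2 ^ s := by rw [← hxs]
      _ = x ^ 2 ^ s + y ^ 2 ^ s := hadd x y s
      _ = x ^ 2 ^ s + y := by rw [hys]
      _ = x := by linear_combination hy + x ^ 2 ^ s * h2
  -- gcd (s*2) n = s
  have hgcd2 : Nat.gcd (s * 2) n = s := by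
    rw [hn, Nat.gcd_mul_left]
    have h2m : Nat.gcd 2 m = 1 := by
      have hm1 : m % 2 = 1 := Nat.odd_iff.mp hm
      have : ¬ (2 ∣ m) := by omega
      exact (Nat.prime_two.coprime_iff_not_dvd).mpr this
    rw [h2m, mul_one]
  have := pow_two_pow_gcd x (s * 2) n hx2s (hpowcard x)
  rwa [hgcd2] at this
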